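/- Let L ⊆ Ω be fields, let W ⊆ L be a finite subgroup of the additive group (L, +), and let ξ ∈ Ω be such that L(ξ)/L is a finite Galois extension and σ(ξ) − ξ ∈ W for every σ ∈ Gal(L(ξ)/L). Then the product ∏_{w ∈ W} (ξ − w) lies in L, and there exists z ∈ L(ξ) with N_{L(ξ)/L}(z) = ∏_{w ∈ W} (ξ − w); that is, ∏_{w ∈ W} (ξ − w) is a norm from L(ξ) to L. -/

import Mathlib

set_option maxHeartbeats 1000000
set_option synthInstance.maxHeartbeats 100000

open IntermediateField Classical in
/-- Let `L ⊆ Ω` be fields, `W ⊆ L` a finite subgroup of `(L,+)`, and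
`ξ ∈ Ω` such that `L(ξ)/L` is a finite Galois extension with `σ ξ - ξ ∈ W` for every
`σ ∈ Gal(L(ξ)/L)`. Then `∏_{w ∈ W} (ξ - w)` lies in `L`, and it is a norm from `L(ξ)`:
there is `z ∈ L(ξ)` with `N_{L(ξ)/L}(z) = ∏_{w ∈ W} (ξ - w)`. -/
theorem stmt_11 {L Ω : Type*} [Field L] [Field Ω] [Algebra L Ω]
    (W : AddSubgroup L) (hWfin : (W : Set L).Finite)
    (ξ : Ω)
    [FiniteDimensional L L⟮ξ⟯] (hGal : IsGalois L L⟮ξ⟯)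
    (hσ : ∀ σ : L⟮ξ⟯ ≃ₐ[L] L⟮ξ⟯, ∃ w ∈ W,
      ((σ (AdjoinSimple.gen L ξ) - AdjoinSimple.gen L ξ : L⟮ξ⟯) : Ω) = algebraMap L Ω w) :
    ∃ (a : L) (z : L⟮ξ⟯),
      algebraMap L Ω a = ∏ w ∈ hWfin.toFinset, (ξ - algebraMap L Ω w) ∧
      Algebra.norm L z = a := by
  classical
  haveI := hGal
  set K := L⟮ξ⟯ with hK
  set g : K := AdjoinSimple.gen L ξ with hg
  choose w hwW hw using hσ
  have hcoe : Function.Injective ((↑) : K → Ω) := Subtype.val_injective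
  have halg : ∀ b : L, ((algebraMap L K b : K) : Ω) = algebraMap L Ω b := by
    intro b
    rw [IsScalarTower.algebraMap_apply L K Ω, IntermediateField.algebraMap_apply]
  have hgξ : (g : Ω) = ξ := rfl
  have hinjK : Function.Injective (algebraMap L K) := (algebraMap L K).injective
  -- σ g = g + w σ
  have key : ∀ σ : K ≃ₐ[L] K, σ g = g + algebraMap L K (w σ) := by
    intro σ
    apply hcoe
    have := hw σ
    push_cast at this ⊢
    linear_combination this
  have hw1 : w 1 = 0 := by
    have h := key 1
    simp only [AlgEquiv.one_apply] at h
    have h2 : algebraMap L K (w 1) = algebraMap L K 0 := by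
      rw [map_zero]; linear_combination -h
    exact hinjK h2
  have hwmul : ∀ σ τ : K ≃ₐ[L] K, w (σ * τ) = w σ + w τ := by
    intro σ τ
    have h1 : (σ * τ) g = g + algebraMap L K (w σ + w τ) := by
      calc (σ * τ) g = σ (τ g) := rfl
        _ = σ (g + algebraMap L K (w τ)) := by rw [key τ]
        _ = σ g + algebraMap L K (w τ) := by rw [map_add, AlgEquiv.commutes]
        _ = g + algebraMap L K (w σ + w τ) := by rw [key σ, map_add]; ring
    have h2 := (key (σ * τ)).symm.trans h1
    exact hinjK (add_left_cancel h2)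
  have hwinj : Function.Injective w := by
    intro σ τ h
    have hστ : σ g = τ g := by rw [key σ, key τ, h]
    have : σ.toAlgHom = τ.toAlgHom := by
      apply IntermediateField.adjoin_algHom_ext
      intro x hx
      rcases hx with rfl
      exact hστ
    exact AlgEquiv.ext fun x => AlgHom.congr_fun this x
  -- the image subgroup H
  set H : AddSubgroup L :=
    { carrier := Set.range w
      zero_mem' := ⟨1, hw1⟩
      add_mem' := by
        rintro a b ⟨σ, rfl⟩ ⟨τ, rfl⟩
        exact ⟨σ * τ, hwmul σ τ⟩
      neg_mem' := by
        rintro a ⟨σ, rfl⟩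
        refine ⟨σ⁻¹, ?_⟩
        have h := hwmul σ σ⁻¹
        rw [mul_inv_cancel, hw1] at h
        linear_combination -h } with hH
  have memH : ∀ x : L, x ∈ H ↔ ∃ σ : K ≃ₐ[L] K, w σ = x := fun x => Iff.rfl
  set q : L → L ⧸ H := QuotientAddGroup.mk with hq
  set WF : Finset L := hWfin.toFinset with hWF
  have hmemWF : ∀ x : L, x ∈ WF ↔ x ∈ W := fun x => hWfin.mem_toFinset
  set T : Finset (L ⧸ H) := WF.image q with hT
  have hrep : ∀ t ∈ T, ∃ c, c ∈ W ∧ q c = t := by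
    intro t ht
    rcases Finset.mem_image.1 ht with ⟨c, hc, rfl⟩
    exact ⟨c, (hmemWF c).1 hc, rfl⟩
  choose c hcW hcq using hrep
  -- the fiber product identity
  have fiber : ∀ (t : L ⧸ H) (ht : t ∈ T),
      ∏ x ∈ WF.filter (fun x => q x = t), (ξ - algebraMap L Ω x)
        = ∏ σ : K ≃ₐ[L] K, ((σ (g - algebraMap L K (c t ht)) : K) : Ω) := by
    intro t ht
    refine (Finset.prod_bij (fun σ _ => c t ht - w σ) ?_ ?_ ?_ ?_).symm
    · intro σ _
      rw [Finset.mem_filter, hmemWF]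
      refine ⟨W.sub_mem (hcW t ht) (hwW σ), ?_⟩
      have hqe : q (c t ht - w σ) = q (c t ht) := by
        refine (QuotientAddGroup.eq).2 ?_
        refine (memH _).2 ⟨σ, ?_⟩
        ring
      exact hqe.trans (hcq t ht)
    · intro σ₁ _ σ₂ _ h
      exact hwinj (by linear_combination -h)
    · intro x hx
      rw [Finset.mem_filter] at hx
      obtain ⟨hxW, hxq⟩ := hx
      have hmem : -x + c t ht ∈ H := (QuotientAddGroup.eq).1 (hxq.trans (hcq t ht).symm)
      obtain ⟨σ, hσ'⟩ := (memH _).1 hmem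
      refine ⟨σ, Finset.mem_univ σ, ?_⟩
      rw [hσ']
      ring
    · intro σ _
      have e1 : σ (g - algebraMap L K (c t ht))
          = g + algebraMap L K (w σ) - algebraMap L K (c t ht) := by
        rw [map_sub, key σ, AlgEquiv.commutes]
      have e2 : ((σ (g - algebraMap L K (c t ht)) : K) : Ω)
          = ξ + algebraMap L Ω (w σ) - algebraMap L Ω (c t ht) := by
        rw [e1]
        push_cast
        rw [hgξ]
      rw [e2, map_sub]
      ring
  -- the norm element
  set z : K := ∏ t ∈ T.attach, (g - algebraMap L K (c t.1 t.2)) with hz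
  refine ⟨Algebra.norm L z, z, ?_, rfl⟩
  rw [← halg, Algebra.norm_eq_prod_automorphisms]
  calc ((∏ σ : K ≃ₐ[L] K, σ z : K) : Ω)
      = ∏ σ : K ≃ₐ[L] K, ((σ z : K) : Ω) := by push_cast; rfl
    _ = ∏ σ : K ≃ₐ[L] K, ∏ t ∈ T.attach, ((σ (g - algebraMap L K (c t.1 t.2)) : K) : Ω) := by
        refine Finset.prod_congr rfl fun σ _ => ?_
        rw [hz, map_prod]
        push_cast
        rfl
    _ = ∏ t ∈ T.attach, ∏ σ : K ≃ₐ[L] K, ((σ (g - algebraMap L K (c t.1 t.2)) : K) : Ω) :=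
        Finset.prod_comm
    _ = ∏ t ∈ T.attach, ∏ x ∈ WF.filter (fun x => q x = t.1), (ξ - algebraMap L Ω x) :=
        Finset.prod_congr rfl fun t _ => (fiber t.1 t.2).symm
    _ = ∏ t ∈ T, ∏ x ∈ WF.filter (fun x => q x = t), (ξ - algebraMap L Ω x) :=
        Finset.prod_attach T (fun t => ∏ x ∈ WF.filter (fun x => q x = t), (ξ - algebraMap L Ω x))
    _ = ∏ x ∈ WF, (ξ - algebraMap L Ω x) :=
        Finset.prod_fiberwise_of_maps_to (fun x hx => Finset.mem_image_of_mem q hx) _
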